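/- Let $\theta > k \ge 1$ and let $\{X^j\}$ be a finite collection of points in $\mathbb{R}^n$ forming the scaled lattice $X^j = L \cdot q^j$ where $q^j$ ranges over integer points of $[0,m]^k \times \{0\} \subset \mathbb{R}^n$ and $L > 1$. Let $\Omega_i = \{y : |y - X^i| \le |y - X^j| \ \forall j\}$. Then there is a constant $C = C(\theta, k, n) > 1$, independent of $m$ and $L$, such that for every $i$ and every $y \in \Omega_i$ with $|y - X^i| \le L$: $$\frac{1}{(1+|y-X^i|)^{\theta}} \le \sum_j \frac{1}{(1+|y-X^j|)^{\theta}} \le \frac{C}{(1+|y-X^i|)^{\theta}}.$$ -/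

import Mathlib

open Real

/-- The scaled lattice point of `ℝ^n` associated to `q : Fin k → Fin (m+1)` and spacing `L`:
its first `k` coordinates are `L * q i` and the remaining ones vanish. -/
noncomputable def latticePt (n k m : ℕ) (L : ℝ) (q : Fin k → Fin (m + 1)) :
    EuclideanSpace ℝ (Fin n) :=
  WithLp.toLp 2 (fun i : Fin n => if h : (i : ℕ) < k then L * ((q ⟨i, h⟩ : ℕ) : ℝ) else 0)

private lemma natDist_cast_real (a b : ℕ) : ((Nat.dist a b : ℕ) : ℝ) = |(a:ℝ) - b| := by
  rcases le_total a b with h | h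
  · rw [Nat.dist_eq_sub_of_le h, Nat.cast_sub h, abs_sub_comm,
      abs_of_nonneg (sub_nonneg.2 (by exact_mod_cast h))]
  · rw [Nat.dist_eq_sub_of_le_right h, Nat.cast_sub h,
      abs_of_nonneg (sub_nonneg.2 (by exact_mod_cast h))]

private lemma coord_le_dist {n : ℕ} (x y : EuclideanSpace ℝ (Fin n)) (i : Fin n) :
    dist (x i) (y i) ≤ dist x y := by
  rw [EuclideanSpace.dist_eq]
  have h : dist (x i) (y i) = Real.sqrt (dist (x i) (y i) ^ 2) :=
    (Real.sqrt_sq dist_nonneg).symm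
  rw [h]
  exact Real.sqrt_le_sqrt (Finset.single_le_sum (f := fun j => dist (x j) (y j) ^ 2) (fun j _ => sq_nonneg _) (Finset.mem_univ i))

set_option maxHeartbeats 2000000 in
theorem stmt_11 {n k : ℕ} (θ : ℝ) (hk : 1 ≤ k) (hkn : k ≤ n) (hθ : (k : ℝ) < θ) :
    ∃ C : ℝ, 1 < C ∧ ∀ m : ℕ, 1 ≤ m → ∀ L : ℝ, 1 < L →
      ∀ qi : Fin k → Fin (m + 1), ∀ y : EuclideanSpace ℝ (Fin n),
        (∀ qj : Fin k → Fin (m + 1),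
          dist y (latticePt n k m L qi) ≤ dist y (latticePt n k m L qj)) →
        dist y (latticePt n k m L qi) ≤ L →
        1 / (1 + dist y (latticePt n k m L qi)) ^ θ ≤
          (∑ qj : Fin k → Fin (m + 1), 1 / (1 + dist y (latticePt n k m L qj)) ^ θ) ∧
        (∑ qj : Fin k → Fin (m + 1), 1 / (1 + dist y (latticePt n k m L qj)) ^ θ) ≤
          C / (1 + dist y (latticePt n k m L qi)) ^ θ := by
  have hk0 : (0:ℝ) < k := by exact_mod_cast hk
  have hθ1 : (1:ℝ) ≤ θ := le_trans (by exact_mod_cast hk) hθ.le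
  have hθ0 : (0:ℝ) < θ := lt_of_lt_of_le one_pos hθ1
  set s : ℝ := θ / k with hs_def
  have hs1 : 1 < s := (one_lt_div hk0).2 hθ
  have hs0 : 0 < s := lt_trans one_pos hs1
  set g : ℕ → ℝ := fun d => (max (d:ℝ) 1) ^ (-s) with hg_def
  have hg_nonneg : ∀ d, 0 ≤ g d :=
    fun d => Real.rpow_nonneg (le_trans zero_le_one (le_max_right _ _)) _
  have hg_sum : Summable g := by
    have h1 : Summable (fun d : ℕ => ((d:ℝ)) ^ (-s)) :=
      Real.summable_nat_rpow.2 (by linarith)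
    have h2 : Summable (fun d : ℕ => (((d+1:ℕ)):ℝ) ^ (-s)) :=
      (summable_nat_add_iff 1).2 h1
    refine (summable_nat_add_iff 1).1 (h2.congr fun d => ?_)
    simp only [hg_def]
    rw [max_eq_left (by push_cast; linarith [Nat.cast_nonneg (α := ℝ) d])]
  set G : ℝ := ∑' d, g d with hG_def
  have hG1 : 1 ≤ G := by
    have h0 : g 0 = 1 := by
      simp only [hg_def, Nat.cast_zero, max_eq_right zero_le_one, Real.one_rpow]
    calc (1:ℝ) = g 0 := h0.symm
    _ ≤ G := Summable.le_tsum hg_sum 0 (fun j _ => hg_nonneg j)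
  have hG0 : 0 < G := lt_of_lt_of_le one_pos hG1
  have h4θ : (1:ℝ) ≤ 4 ^ θ := Real.one_le_rpow (by norm_num) hθ0.le
  refine ⟨4 ^ θ * (2*G) ^ k, ?_, ?_⟩
  · calc (1:ℝ) < 2 ^ k := one_lt_pow₀ one_lt_two (by omega)
    _ ≤ (2*G) ^ k := by
        apply pow_le_pow_left₀ (by norm_num) (by linarith)
    _ ≤ 4 ^ θ * (2*G) ^ k := le_mul_of_one_le_left (by positivity) h4θ
  intro m hm L hL qi y hVor hnear
  set X : (Fin k → Fin (m+1)) → EuclideanSpace ℝ (Fin n) := latticePt n k m L with hX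
  set P : ℝ := 1 + dist y (X qi) with hP_def
  have hP1 : 1 ≤ P := by have := dist_nonneg (x := y) (y := X qi); simp [hP_def]
  have hP0 : 0 < P := lt_of_lt_of_le one_pos hP1
  have hPθ : 0 < P ^ θ := Real.rpow_pos_of_pos hP0 θ
  have hPL : P ≤ 2 * L := by simp only [hP_def]; linarith
  -- distances are at least 1+dist, positive
  have hpos : ∀ qj, 0 < (1 + dist y (X qj)) ^ θ := fun qj =>
    Real.rpow_pos_of_pos (by linarith [dist_nonneg (x := y) (y := X qj)]) θ
  constructor
  · exact Finset.single_le_sum (f := fun qj => 1 / (1 + dist y (X qj)) ^ θ)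
      (fun qj _ => le_of_lt (by positivity)) (Finset.mem_univ qi)
  -- key coordinate lower bound on distance between lattice points
  have hlatt : ∀ (qj : Fin k → Fin (m+1)) (i0 : Fin k),
      L * (Nat.dist (qj i0 : ℕ) (qi i0 : ℕ) : ℝ) ≤ dist (X qi) (X qj) := by
    intro qj i0
    set c0 : Fin n := ⟨i0, lt_of_lt_of_le i0.isLt hkn⟩ with hc0
    have hlt : (c0 : ℕ) < k := i0.isLt
    have hval : ∀ q : Fin k → Fin (m+1), X q c0 = L * ((q i0 : ℕ) : ℝ) := by
      intro q
      simp only [hX, latticePt, WithLp.ofLp_toLp]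
      rw [dif_pos hlt]
    have := coord_le_dist (X qi) (X qj) c0
    rw [hval qi, hval qj, Real.dist_eq] at this
    have hL0 : (0:ℝ) < L := by linarith
    have heq : |L * ((qi i0 : ℕ) : ℝ) - L * ((qj i0 : ℕ) : ℝ)|
        = L * |((qj i0 : ℕ) : ℝ) - ((qi i0 : ℕ) : ℝ)| := by
      rw [← mul_sub, abs_mul, abs_of_pos hL0, abs_sub_comm]
    rw [natDist_cast_real, ← heq]
    exact this
  -- master pointwise bound
  have master : ∀ qj : Fin k → Fin (m+1),
      1 / (1 + dist y (X qj)) ^ θ ≤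
        4 ^ θ / P ^ θ * ∏ i' : Fin k, g (Nat.dist (qj i' : ℕ) (qi i' : ℕ)) := by
    intro qj
    set d : Fin k → ℕ := fun i' => Nat.dist (qj i' : ℕ) (qi i' : ℕ) with hd
    set r : ℕ := Finset.univ.sup d with hr_def
    have hdr : ∀ i', d i' ≤ r := fun i' => Finset.le_sup (Finset.mem_univ i')
    rcases le_or_gt r 1 with hr | hr
    · -- near case
      have hprod : ∏ i' : Fin k, g (d i') = 1 := by
        apply Finset.prod_eq_one
        intro i' _
        have : ((d i' : ℕ) : ℝ) ≤ 1 := by exact_mod_cast le_trans (hdr i') hr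
        simp only [hg_def]
        rw [max_eq_right this, Real.one_rpow]
      rw [hprod, mul_one]
      have h1 : P ^ θ ≤ (1 + dist y (X qj)) ^ θ :=
        Real.rpow_le_rpow hP0.le (by have := hVor qj; simp only [hP_def]; linarith) hθ0.le
      calc 1 / (1 + dist y (X qj)) ^ θ ≤ 1 / P ^ θ :=
          one_div_le_one_div_of_le hPθ h1
      _ ≤ 4 ^ θ / P ^ θ := div_le_div₀ (by positivity) h4θ hPθ le_rfl
    · -- far case
      have hr2 : 2 ≤ r := hr
      have hrR : (2:ℝ) ≤ (r:ℝ) := by exact_mod_cast hr2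
      have hr0 : (0:ℝ) < r := by linarith
      have hQ : P * r / 4 ≤ 1 + dist y (X qj) := by
        have htri : dist (X qi) (X qj) ≤ dist (X qi) y + dist y (X qj) := dist_triangle _ _ _
        obtain ⟨i0, -, hi0⟩ := Finset.exists_mem_eq_sup Finset.univ
          (Finset.univ_nonempty_iff.2 ⟨⟨0, by omega⟩⟩) d
        have h1 : L * (r:ℝ) ≤ dist (X qi) (X qj) := by
          rw [hr_def, hi0]; exact hlatt qj i0
        have h2 : dist (X qi) y = dist y (X qi) := dist_comm _ _
        -- dist y (X qj) ≥ L*r - L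
        have h3 : L * r - L ≤ dist y (X qj) := by
          rw [h2] at htri; linarith
        -- L*r - L ≥ L*r/2 since r ≥ 2
        have hL0 : (0:ℝ) ≤ L := by linarith
        have hmul : L * 2 ≤ L * r := mul_le_mul_of_nonneg_left hrR hL0
        have h4 : L * r / 2 ≤ L * r - L := by linarith
        have hmul2 : P * r ≤ 2 * L * r := mul_le_mul_of_nonneg_right hPL hr0.le
        have h5 : P * r / 4 ≤ L * r / 2 := by nlinarith [hmul2]
        linarith
      have hQ0 : 0 < P * (r:ℝ) / 4 := by positivity
      have hQ0' : 0 < 1 + dist y (X qj) := lt_of_lt_of_le hQ0 hQ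
      -- step: 1/(1+Dj)^θ ≤ 4^θ / (P^θ * r^θ)
      have step1 : 1 / (1 + dist y (X qj)) ^ θ ≤ 4 ^ θ / (P ^ θ * (r:ℝ) ^ θ) := by
        have h1 : (P * r / 4) ^ θ ≤ (1 + dist y (X qj)) ^ θ :=
          Real.rpow_le_rpow hQ0.le hQ hθ0.le
        have h2 : (P * (r:ℝ) / 4) ^ θ = P ^ θ * (r:ℝ) ^ θ / 4 ^ θ := by
          rw [Real.div_rpow (by positivity) (by norm_num),
            Real.mul_rpow hP0.le hr0.le]
        calc 1 / (1 + dist y (X qj)) ^ θ ≤ 1 / (P * r / 4) ^ θ :=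
            one_div_le_one_div_of_le (Real.rpow_pos_of_pos hQ0 θ) h1
        _ = 4 ^ θ / (P ^ θ * (r:ℝ) ^ θ) := by
            rw [h2]; field_simp
      -- step: r^(-θ) ≤ ∏ g (d i')
      have step2 : ((r:ℝ)) ^ (-θ) ≤ ∏ i' : Fin k, g (d i') := by
        have hper : ∀ i' : Fin k, ((r:ℝ)) ^ (-s) ≤ g (d i') := by
          intro i'
          have hmax : max ((d i' : ℕ) : ℝ) 1 ≤ (r:ℝ) := by
            apply max_le
            · exact_mod_cast hdr i'
            · linarith
          exact Real.rpow_le_rpow_of_nonpos (by positivity) hmax (by linarith)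
        have hcalc : ((r:ℝ)) ^ (-θ) = ∏ _i' : Fin k, ((r:ℝ)) ^ (-s) := by
          rw [Finset.prod_const, Finset.card_univ, Fintype.card_fin,
            ← Real.rpow_natCast ((r:ℝ) ^ (-s)) k, ← Real.rpow_mul hr0.le]
          congr 1
          rw [hs_def, neg_mul, div_mul_cancel₀ θ hk0.ne']
        calc ((r:ℝ)) ^ (-θ) = ∏ _i' : Fin k, ((r:ℝ)) ^ (-s) := hcalc
        _ ≤ ∏ i' : Fin k, g (d i') :=
            Finset.prod_le_prod (fun _ _ => by positivity) (fun i' _ => hper i')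
      calc 1 / (1 + dist y (X qj)) ^ θ ≤ 4 ^ θ / (P ^ θ * (r:ℝ) ^ θ) := step1
      _ = 4 ^ θ / P ^ θ * ((r:ℝ)) ^ (-θ) := by
          rw [Real.rpow_neg hr0.le]; field_simp
      _ ≤ 4 ^ θ / P ^ θ * ∏ i' : Fin k, g (d i') := by
          apply mul_le_mul_of_nonneg_left step2 (by positivity)
  -- inner one-dimensional sum bound
  have inner : ∀ a : Fin (m+1), ∑ c : Fin (m+1), g (Nat.dist (c : ℕ) (a : ℕ)) ≤ 2 * G := by
    intro a
    have hsplit : ∀ c : Fin (m+1), g (Nat.dist (c : ℕ) (a : ℕ)) ≤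
        (if (c:ℕ) ≤ (a:ℕ) then g ((a:ℕ) - (c:ℕ)) else 0) +
        (if (a:ℕ) ≤ (c:ℕ) then g ((c:ℕ) - (a:ℕ)) else 0) := by
      intro c
      rcases le_total (c:ℕ) (a:ℕ) with h | h
      · rw [if_pos h, Nat.dist_eq_sub_of_le h]
        have : (0:ℝ) ≤ (if (a:ℕ) ≤ (c:ℕ) then g ((c:ℕ) - (a:ℕ)) else 0) := by
          split <;> [exact hg_nonneg _; exact le_rfl]
        linarith [this]
      · rw [if_pos h, Nat.dist_eq_sub_of_le_right h]
        have : (0:ℝ) ≤ (if (c:ℕ) ≤ (a:ℕ) then g ((a:ℕ) - (c:ℕ)) else 0) := by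
          split <;> [exact hg_nonneg _; exact le_rfl]
        linarith [this]
    calc ∑ c : Fin (m+1), g (Nat.dist (c : ℕ) (a : ℕ))
        ≤ ∑ c : Fin (m+1), ((if (c:ℕ) ≤ (a:ℕ) then g ((a:ℕ) - (c:ℕ)) else 0) +
          (if (a:ℕ) ≤ (c:ℕ) then g ((c:ℕ) - (a:ℕ)) else 0)) :=
          Finset.sum_le_sum (fun c _ => hsplit c)
    _ = (∑ c ∈ Finset.univ.filter (fun c : Fin (m+1) => (c:ℕ) ≤ (a:ℕ)), g ((a:ℕ) - (c:ℕ)))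
        + (∑ c ∈ Finset.univ.filter (fun c : Fin (m+1) => (a:ℕ) ≤ (c:ℕ)), g ((c:ℕ) - (a:ℕ))) := by
        rw [Finset.sum_add_distrib, Finset.sum_filter, Finset.sum_filter]
    _ ≤ G + G := by
        have key : ∀ (S : Finset (Fin (m+1))) (φ : Fin (m+1) → ℕ),
            Set.InjOn φ S → (∑ c ∈ S, g (φ c)) ≤ G := by
          intro S φ hφ
          rw [show (∑ c ∈ S, g (φ c)) = ∑ dd ∈ S.image φ, g dd from
            (Finset.sum_image (fun x hx y hy hxy =>
              hφ (Finset.mem_coe.2 hx) (Finset.mem_coe.2 hy) hxy)).symm]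
          exact Summable.sum_le_tsum _ (fun i _ => hg_nonneg i) hg_sum
        gcongr
        · apply key _ (fun c : Fin (m+1) => (a:ℕ) - (c:ℕ))
          intro c1 h1 c2 h2 hcc
          simp only [Finset.coe_filter, Set.mem_setOf_eq, Finset.mem_univ, true_and] at h1 h2
          have hcc' : (a:ℕ) - (c1:ℕ) = (a:ℕ) - (c2:ℕ) := hcc
          have : (c1:ℕ) = (c2:ℕ) := by omega
          exact Fin.ext this
        · apply key _ (fun c : Fin (m+1) => (c:ℕ) - (a:ℕ))
          intro c1 h1 c2 h2 hcc
          simp only [Finset.coe_filter, Set.mem_setOf_eq, Finset.mem_univ, true_and] at h1 h2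
          have hcc' : (c1:ℕ) - (a:ℕ) = (c2:ℕ) - (a:ℕ) := hcc
          have : (c1:ℕ) = (c2:ℕ) := by omega
          exact Fin.ext this
    _ = 2 * G := by ring
  -- put it together
  calc ∑ qj : Fin k → Fin (m+1), 1 / (1 + dist y (X qj)) ^ θ
      ≤ ∑ qj : Fin k → Fin (m+1),
          (4 ^ θ / P ^ θ * ∏ i' : Fin k, g (Nat.dist (qj i' : ℕ) (qi i' : ℕ))) :=
        Finset.sum_le_sum (fun qj _ => master qj)
  _ = 4 ^ θ / P ^ θ * ∑ qj : Fin k → Fin (m+1),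
        ∏ i' : Fin k, g (Nat.dist (qj i' : ℕ) (qi i' : ℕ)) := by
      rw [Finset.mul_sum]
  _ = 4 ^ θ / P ^ θ * ∏ i' : Fin k, ∑ c : Fin (m+1), g (Nat.dist (c : ℕ) (qi i' : ℕ)) := by
      rw [Fintype.prod_sum (fun i' (c : Fin (m+1)) => g (Nat.dist (c : ℕ) (qi i' : ℕ)))]
  _ ≤ 4 ^ θ / P ^ θ * (2 * G) ^ k := by
      apply mul_le_mul_of_nonneg_left ?_ (by positivity)
      calc ∏ i' : Fin k, ∑ c : Fin (m+1), g (Nat.dist (c : ℕ) (qi i' : ℕ))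
          ≤ ∏ _i' : Fin k, (2 * G) :=
            Finset.prod_le_prod (fun i' _ => Finset.sum_nonneg (fun c _ => hg_nonneg _))
              (fun i' _ => inner (qi i'))
      _ = (2 * G) ^ k := by rw [Finset.prod_const, Finset.card_univ, Fintype.card_fin]
  _ = 4 ^ θ * (2 * G) ^ k / P ^ θ := by ring
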